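/- Let q be an odd prime power, m > 2, and D = {x ∈ GF(q^m) : Tr_{q^m/q}(x) = 0}. The code C = {(Tr_{q^m/q}(bx) + c)_{x ∈ D} : b ∈ GF(q^m), c ∈ GF(q)} has length q^{m−1}, dimension m, minimum distance q^{m−1} − q^{m−2}, and every nonzero codeword has weight q^{m−1} or q^{m−1} − q^{m−2}; specifically there are q−1 codewords of weight q^{m−1} and q(q^{m−1}−1) codewords of weight q^{m−1}−q^{m−2}. -/

import Mathlib

open Finset

/-- The encoding map (b, c) ↦ (Tr_{E/F}(b x) + c)_{x ∈ D}, where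
D = {x ∈ E : Tr_{E/F}(x) = 0}. -/
noncomputable def traceCodeMap (F E : Type*) [Field F] [Field E] [Algebra F E]
    [FiniteDimensional F E] :
    (E × F) →ₗ[F] ({x : E // Algebra.trace F E x = 0} → F) where
  toFun := fun bc x => Algebra.trace F E (bc.1 * x.1) + bc.2
  map_add' := by
    intro a b
    funext x
    simp [add_mul, map_add]
    ring
  map_smul' := by
    intro a b
    funext x
    simp [smul_mul_assoc]
    ring

lemma fiberSum {V K : Type*} [Fintype V] [Fintype K] [DecidableEq K] (f : V → K) (c : ℕ)
    (h : ∀ t : K, Nat.card {x : V // f x = t} = c) :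
    Fintype.card V = Fintype.card K * c := by
  classical
  rw [← Fintype.card_congr (Equiv.sigmaFiberEquiv f), Fintype.card_sigma]
  have : ∀ t : K, Fintype.card {x : V // f x = t} = c := fun t => by
    rw [← Nat.card_eq_fintype_card]; exact h t
  simp [this, Finset.sum_const, mul_comm]

section Aux
variable {F E : Type*} [Field F] [Field E] [Fintype F] [Fintype E] [DecidableEq F] [DecidableEq E]
  [Algebra F E] [FiniteDimensional F E]

set_option linter.unusedSectionVars false

lemma traceFiber {x0 : E} (hx0 : Algebra.trace F E x0 = 1) (t : F) :
    Nat.card {x : E // Algebra.trace F E x = t}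
      = Nat.card {x : E // Algebra.trace F E x = 0} := by
  refine Nat.card_congr ⟨fun x => ⟨x.1 - t • x0, by simp [x.2, hx0]⟩,
    fun x => ⟨x.1 + t • x0, by simp [x.2, hx0]⟩, fun x => by ext; simp, fun x => by ext; simp⟩

lemma bFiber {b x1 : E} (h0 : Algebra.trace F E x1 = 0) (h1 : Algebra.trace F E (b * x1) = 1)
    (t : F) :
    Nat.card {x : {x : E // Algebra.trace F E x = 0} // Algebra.trace F E (b * x.1) = t}
      = Nat.card {x : {x : E // Algebra.trace F E x = 0} // Algebra.trace F E (b * x.1) = 0} := by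
  refine Nat.card_congr ⟨fun x => ⟨⟨x.1.1 - t • x1, by simp [x.1.2, h0]⟩,
      by simp [mul_sub, mul_smul_comm, x.2, h1]⟩,
    fun x => ⟨⟨x.1.1 + t • x1, by simp [x.1.2, h0]⟩,
      by simp [mul_add, mul_smul_comm, x.2, h1]⟩,
    fun x => by ext; simp, fun x => by ext; simp⟩

lemma scalar_of {b : E}
    (h : ∀ x : E, Algebra.trace F E x = 0 → Algebra.trace F E (b * x) = 0) :
    ∃ l : F, b = algebraMap F E l := by
  obtain ⟨x0, hx0⟩ := Algebra.trace_surjective F E 1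
  set l := Algebra.trace F E (b * x0) with hl
  refine ⟨l, ?_⟩
  have key : ∀ y : E, Algebra.traceForm F E (b - algebraMap F E l) y = 0 := by
    intro y
    have h1 : Algebra.trace F E (y - (Algebra.trace F E y) • x0) = 0 := by
      simp [hx0]
    have h2 := h _ h1
    have h3 : Algebra.trace F E (b * y) = Algebra.trace F E y * l := by
      rw [mul_sub, mul_smul_comm, map_sub, map_smul, smul_eq_mul, sub_eq_zero] at h2
      exact h2
    have h4 : Algebra.trace F E (algebraMap F E l * y) = Algebra.trace F E y * l := by
      rw [← Algebra.smul_def, map_smul, smul_eq_mul, mul_comm]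
    simp [Algebra.traceForm_apply, sub_mul, h3, h4]
  have := (traceForm_nondegenerate F E).1 _ key
  rwa [sub_eq_zero] at this

end Aux

set_option maxHeartbeats 1000000 in
theorem stmt4 {p e m : ℕ} (hp : p.Prime) (hodd : Odd p) (he : 0 < e) (hm : 2 < m)
    {F E : Type*} [Field F] [Field E] [Fintype F] [Fintype E] [DecidableEq F] [DecidableEq E]
    [Algebra F E] [FiniteDimensional F E]
    (q : ℕ) (hq : q = p ^ e)
    (hcardF : Fintype.card F = q) (hcardE : Fintype.card E = q ^ m)
    (C : Submodule F ({x : E // Algebra.trace F E x = 0} → F))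
    (hC : C = LinearMap.range (traceCodeMap F E)) :
    Fintype.card {x : E // Algebra.trace F E x = 0} = q ^ (m - 1) ∧
    Module.finrank F C = m ∧
    (∀ w ∈ C, w ≠ 0 →
      hammingNorm w = q ^ (m - 1) ∨ hammingNorm w = q ^ (m - 1) - q ^ (m - 2)) ∧
    (∀ w ∈ C, w ≠ 0 → q ^ (m - 1) - q ^ (m - 2) ≤ hammingNorm w) ∧
    Nat.card {w : {x : E // Algebra.trace F E x = 0} → F //
        w ∈ C ∧ hammingNorm w = q ^ (m - 1)} = q - 1 ∧
    Nat.card {w : {x : E // Algebra.trace F E x = 0} → F //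
        w ∈ C ∧ hammingNorm w = q ^ (m - 1) - q ^ (m - 2)} = q * (q ^ (m - 1) - 1) := by
  classical
  subst hC
  have hq2 : 2 ≤ q := by
    subst hq
    calc 2 ≤ p := hp.two_le
      _ ≤ p ^ e := Nat.le_self_pow he.ne' p
  have hq0 : 0 < q := by omega
  have hm1 : m - 2 + 1 = m - 1 := by omega
  have hm2 : m - 1 + 1 = m := by omega
  have hpow1 : q ^ m = q * q ^ (m - 1) := by
    calc q ^ m = q ^ (m - 1 + 1) := by rw [hm2]
      _ = q * q ^ (m - 1) := by rw [pow_succ]; ring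
  have hpow2 : q ^ (m - 1) = q * q ^ (m - 2) := by
    calc q ^ (m - 1) = q ^ (m - 2 + 1) := by rw [hm1]
      _ = q * q ^ (m - 2) := by rw [pow_succ]; ring
  have hp2 : 0 < q ^ (m - 2) := pow_pos hq0 _
  have hp1 : 0 < q ^ (m - 1) := pow_pos hq0 _
  have hsm : q ^ (m - 2) < q ^ (m - 1) := by nlinarith
  obtain ⟨x0, hx0⟩ := Algebra.trace_surjective F E (1 : F)
  have zeroD : Algebra.trace F E (0 : E) = 0 := map_zero _
  have cardD : Fintype.card {x : E // Algebra.trace F E x = 0} = q ^ (m - 1) := by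
    have h := fiberSum (fun x : E => Algebra.trace F E x)
      (Nat.card {x : E // Algebra.trace F E x = 0}) (fun t => traceFiber hx0 t)
    rw [hcardE, hcardF, Nat.card_eq_fintype_card] at h
    exact Nat.eq_of_mul_eq_mul_left hq0 (h.symm.trans hpow1)
  have word_apply : ∀ (b : E) (c : F) (x : {x : E // Algebra.trace F E x = 0}),
      traceCodeMap F E (b, c) x = Algebra.trace F E (b * x.1) + c := fun _ _ _ => rfl
  have zero_word : ∀ c : F,
      traceCodeMap F E (0, c) = fun _ : {x : E // Algebra.trace F E x = 0} => c := by
    intro c; funext x; rw [word_apply, zero_mul, map_zero, zero_add]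
  have scalar_word : ∀ (l c : F),
      traceCodeMap F E (algebraMap F E l, c) = fun _ : {x : E // Algebra.trace F E x = 0} => c := by
    intro l c; funext x; rw [word_apply, ← Algebra.smul_def, map_smul, x.2, smul_zero, zero_add]
  have wt_const : ∀ c : F, c ≠ 0 →
      hammingNorm (fun _ : {x : E // Algebra.trace F E x = 0} => c) = q ^ (m - 1) := by
    intro c hc
    have h1 : hammingNorm (fun _ : {x : E // Algebra.trace F E x = 0} => c)
        = (univ.filter (fun _ : {x : E // Algebra.trace F E x = 0} => c ≠ 0)).card := rfl
    rw [h1, Finset.filter_true_of_mem (fun _ _ => hc), card_univ, cardD]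
  have wt_neg : ∀ w : {x : E // Algebra.trace F E x = 0} → F,
      hammingNorm w = Fintype.card {x : E // Algebra.trace F E x = 0}
        - (univ.filter (fun x => w x = 0)).card := by
    intro w
    have h1 : hammingNorm w = (univ.filter (fun x => ¬ w x = 0)).card := rfl
    rw [h1, Finset.filter_not, Finset.card_sdiff_of_subset (Finset.filter_subset _ _), card_univ]
  have nonscalar_wt : ∀ (b : E) (c : F), (¬ ∃ l : F, b = algebraMap F E l) →
      hammingNorm (traceCodeMap F E (b, c)) = q ^ (m - 1) - q ^ (m - 2) := by
    intro b c hb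
    have hx : ∃ x : E, Algebra.trace F E x = 0 ∧ Algebra.trace F E (b * x) ≠ 0 := by
      by_contra h
      push_neg at h
      exact hb (scalar_of (fun x hx => h x hx))
    obtain ⟨x', hx'0, hx'⟩ := hx
    have h1 : Algebra.trace F E (b * ((Algebra.trace F E (b * x'))⁻¹ • x')) = 1 := by
      rw [mul_smul_comm, map_smul, smul_eq_mul, inv_mul_cancel₀ hx']
    have h0 : Algebra.trace F E ((Algebra.trace F E (b * x'))⁻¹ • x') = 0 := by
      rw [map_smul, hx'0, smul_zero]
    have hfib := fun t : F => bFiber h0 h1 t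
    have hK : Nat.card {x : {x : E // Algebra.trace F E x = 0} //
        Algebra.trace F E (b * x.1) = 0} = q ^ (m - 2) := by
      have h := fiberSum (fun x : {x : E // Algebra.trace F E x = 0} =>
        Algebra.trace F E (b * x.1)) _ hfib
      rw [cardD, hcardF] at h
      exact Nat.eq_of_mul_eq_mul_left hq0 (h.symm.trans hpow2)
    have hz : (univ.filter (fun x : {x : E // Algebra.trace F E x = 0} =>
        traceCodeMap F E (b, c) x = 0)).card = q ^ (m - 2) := by
      rw [← Fintype.card_subtype, ← Nat.card_eq_fintype_card, ← hK, ← hfib (-c)]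
      apply Nat.card_congr
      apply Equiv.subtypeEquivRight
      intro x
      rw [word_apply]
      constructor
      · intro h; exact eq_neg_of_add_eq_zero_left h
      · intro h; rw [h]; exact neg_add_cancel c
    rw [wt_neg, hz, cardD]
  have struct : ∀ w ∈ LinearMap.range (traceCodeMap F E),
      (∃ c : F, w = fun _ => c) ∨ hammingNorm w = q ^ (m - 1) - q ^ (m - 2) := by
    rintro w ⟨⟨b, c⟩, rfl⟩
    by_cases hb : ∃ l : F, b = algebraMap F E l
    · obtain ⟨l, rfl⟩ := hb
      exact Or.inl ⟨c, scalar_word l c⟩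
    · exact Or.inr (nonscalar_wt b c hb)
  have const_mem : ∀ c : F, (fun _ : {x : E // Algebra.trace F E x = 0} => c)
      ∈ LinearMap.range (traceCodeMap F E) := fun c => ⟨(0, c), zero_word c⟩
  have finrankC : Module.finrank F ↥(LinearMap.range (traceCodeMap F E)) = m := by
    have finE : Module.finrank F E = m := by
      have h := Module.card_eq_pow_finrank (K := F) (V := E)
      rw [hcardE, hcardF] at h
      exact (Nat.pow_right_injective hq2 h.symm)
    have finEF : Module.finrank F (E × F) = m + 1 := by
      rw [Module.finrank_prod, finE, Module.finrank_self]
    have hker : LinearMap.ker (traceCodeMap F E)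
        = LinearMap.range ((Algebra.linearMap F E).prod (0 : F →ₗ[F] F)) := by
      ext bc
      obtain ⟨b, c⟩ := bc
      simp only [LinearMap.mem_ker, LinearMap.mem_range]
      constructor
      · intro h
        have key : ∀ x : {x : E // Algebra.trace F E x = 0},
            Algebra.trace F E (b * x.1) + c = 0 := by
          intro x
          have := congrFun h x
          rwa [word_apply] at this
        have hc : c = 0 := by
          have := key ⟨0, zeroD⟩
          simpa using this
        obtain ⟨l, hl⟩ := scalar_of (fun x hx => by
          have := key ⟨x, hx⟩
          rw [hc, add_zero] at this
          exact this)
        exact ⟨l, by simp [LinearMap.prod_apply, Algebra.linearMap_apply, ← hl, hc, Prod.ext_iff]⟩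
      · rintro ⟨l, hl⟩
        have hb : algebraMap F E l = b := congrArg Prod.fst hl
        have hc : (0 : F) = c := congrArg Prod.snd hl
        rw [← hb, ← hc, scalar_word]
        rfl
    have hinj : Function.Injective ((Algebra.linearMap F E).prod (0 : F →ₗ[F] F)) := by
      intro a b hab
      have h1 := congrArg Prod.fst hab
      simp only [LinearMap.prod_apply, Pi.prod, Algebra.linearMap_apply] at h1
      exact (algebraMap F E).injective h1
    have hkrank : Module.finrank F (LinearMap.ker (traceCodeMap F E)) = 1 := by
      rw [hker, LinearMap.finrank_range_of_inj hinj, Module.finrank_self]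
    have h := LinearMap.finrank_range_add_finrank_ker (traceCodeMap F E)
    rw [hkrank, finEF] at h
    omega
  refine ⟨cardD, finrankC, ?_, ?_, ?_, ?_⟩
  · rintro w hw hw0
    rcases struct w hw with ⟨c, rfl⟩ | h
    · left
      have hc : c ≠ 0 := by rintro rfl; exact hw0 rfl
      exact wt_const c hc
    · exact Or.inr h
  · rintro w hw hw0
    rcases struct w hw with ⟨c, rfl⟩ | h
    · have hc : c ≠ 0 := by rintro rfl; exact hw0 rfl
      rw [wt_const c hc]
      exact Nat.sub_le _ _
    · rw [h]
  · have key : ∀ w, w ∈ LinearMap.range (traceCodeMap F E) → hammingNorm w = q ^ (m - 1) →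
        ∃ c : F, c ≠ 0 ∧ w = fun _ => c := by
      intro w hw hwt
      rcases struct w hw with ⟨c, rfl⟩ | h
      · refine ⟨c, ?_, rfl⟩
        rintro rfl
        rw [show (fun _ : {x : E // Algebra.trace F E x = 0} => (0 : F)) = 0 from rfl,
          hammingNorm_zero] at hwt
        omega
      · omega
    have e : {w : {x : E // Algebra.trace F E x = 0} → F //
        w ∈ LinearMap.range (traceCodeMap F E) ∧ hammingNorm w = q ^ (m - 1)}
        ≃ {c : F // c ≠ 0} := by
      refine ⟨fun w => ⟨w.1 ⟨0, zeroD⟩, ?_⟩,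
        fun c => ⟨fun _ => c.1, const_mem c.1, wt_const c.1 c.2⟩, ?_, ?_⟩
      · obtain ⟨c, hc, hw⟩ := key w.1 w.2.1 w.2.2
        rw [hw]
        exact hc
      · intro w
        obtain ⟨c, hc, hw⟩ := key w.1 w.2.1 w.2.2
        apply Subtype.ext
        simp only [hw]
      · intro c
        rfl
    rw [Nat.card_congr e, Nat.card_eq_fintype_card]
    rw [Fintype.card_subtype_compl, Fintype.card_subtype_eq, hcardF]
  · have constify : ∀ w, w ∈ LinearMap.range (traceCodeMap F E) →
        ¬ hammingNorm w = q ^ (m - 1) - q ^ (m - 2) → ∃ c : F, w = fun _ => c := by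
      intro w hw hwt
      rcases struct w hw with h | h
      · exact h
      · exact absurd h hwt
    have e2 : {w : {x : E // Algebra.trace F E x = 0} → F //
        w ∈ LinearMap.range (traceCodeMap F E)
          ∧ ¬ hammingNorm w = q ^ (m - 1) - q ^ (m - 2)} ≃ F := by
      refine ⟨fun w => w.1 ⟨0, zeroD⟩, fun c => ⟨fun _ => c, const_mem c, ?_⟩, ?_, fun c => rfl⟩
      · by_cases hc : c = 0
        · subst hc
          rw [show (fun _ : {x : E // Algebra.trace F E x = 0} => (0 : F)) = 0 from rfl,
            hammingNorm_zero]
          omega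
        · rw [wt_const c hc]
          omega
      · intro w
        obtain ⟨c, hw⟩ := constify w.1 w.2.1 w.2.2
        apply Subtype.ext
        simp only [hw]
    have hCcard : Nat.card {w : {x : E // Algebra.trace F E x = 0} → F //
        w ∈ LinearMap.range (traceCodeMap F E)} = q ^ m := by
      letI : Fintype ↥(LinearMap.range (traceCodeMap F E)) := Fintype.ofFinite _
      rw [Nat.card_eq_fintype_card]
      have h := Module.card_eq_pow_finrank (K := F) (V := ↥(LinearMap.range (traceCodeMap F E)))
      rw [hcardF, finrankC] at h
      exact h
    have hsplit : Nat.card {w : {x : E // Algebra.trace F E x = 0} → F //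
          w ∈ LinearMap.range (traceCodeMap F E)
            ∧ hammingNorm w = q ^ (m - 1) - q ^ (m - 2)}
        + Nat.card {w : {x : E // Algebra.trace F E x = 0} → F //
          w ∈ LinearMap.range (traceCodeMap F E)
            ∧ ¬ hammingNorm w = q ^ (m - 1) - q ^ (m - 2)} = q ^ m := by
      rw [← hCcard, ← Nat.card_sum]
      apply Nat.card_congr
      exact ((Equiv.subtypeSubtypeEquivSubtypeInter _ _).symm.sumCongr
        (Equiv.subtypeSubtypeEquivSubtypeInter _ _).symm).trans (Equiv.sumCompl _)
    have h2 : Nat.card {w : {x : E // Algebra.trace F E x = 0} → F //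
        w ∈ LinearMap.range (traceCodeMap F E)
          ∧ ¬ hammingNorm w = q ^ (m - 1) - q ^ (m - 2)} = q := by
      rw [Nat.card_congr e2, Nat.card_eq_fintype_card, hcardF]
    have hfinal : Nat.card {w : {x : E // Algebra.trace F E x = 0} → F //
        w ∈ LinearMap.range (traceCodeMap F E)
          ∧ hammingNorm w = q ^ (m - 1) - q ^ (m - 2)} = q ^ m - q := by omega
    rw [hfinal, hpow1, Nat.mul_sub, mul_one]
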